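/- For a finite-horizon MDP, behavior policy π with full support, target policy π', and any bounded functions Q̃^{π'}: S×A → ℝ with Ṽ^{π'}(s) := E_{a~π'(s)}[Q̃^{π'}(s,a)] and Ṽ^{π'}(s_{T+1}) = 0, the doubly robust estimator Ĵ(π') = Ṽ^{π'}(s_0) + Σ_{t=0}^T γ^t ρ_{[0:t]} (r_t + γ Ṽ^{π'}(s_{t+1}) - Q̃^{π'}(s_t, a_t)) is an unbiased estimator of J(π') when trajectories are generated by π, regardless of the choice of Q̃^{π'}. -/

import Mathlib

set_option linter.unusedSectionVars false
set_option maxHeartbeats 1000000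


open Finset

/-- A finite episodic MDP `M = (S, A, P, R, T, γ, s₀)` with finitely supported
reward distribution: `Rd s a` is a distribution over reward outcomes `Rw`,
whose real value is `rval`. -/
structure FinMDP (S A Rw : Type) where
  T : ℕ
  γ : ℝ
  s0 : S
  P : S → A → S → ℝ
  Rd : S → A → Rw → ℝ
  rval : Rw → ℝ

variable {S A Rw : Type} [Fintype S] [Fintype A] [Fintype Rw] [DecidableEq S] [DecidableEq A]

/-- `π s a` is a probability distribution over actions for each state. -/
def IsPolicy (π : S → A → ℝ) : Prop := (∀ s a, 0 ≤ π s a) ∧ (∀ s, ∑ a, π s a = 1)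

namespace FinMDP

/-- the transition and reward functions are genuine probability distributions. -/
def Valid (M : FinMDP S A Rw) : Prop :=
  (∀ s a s', 0 ≤ M.P s a s') ∧ (∀ s a, ∑ s', M.P s a s' = 1) ∧
  (∀ s a r, 0 ≤ M.Rd s a r) ∧ (∀ s a, ∑ r, M.Rd s a r = 1)

/-- a trajectory `s₀, a₀, r₀, …, s_T, a_T, r_T, s_{T+1}`. -/
def Traj (M : FinMDP S A Rw) : Type :=
  (Fin (M.T + 2) → S) × (Fin (M.T + 1) → A) × (Fin (M.T + 1) → Rw)

instance (M : FinMDP S A Rw) : Fintype M.Traj :=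
  inferInstanceAs (Fintype (_ × _ × _))

variable (M : FinMDP S A Rw)

/-- state at time `t` (index clamped to the horizon). -/
def st (τ : M.Traj) (t : ℕ) : S := τ.1 ⟨min t (M.T + 1), by omega⟩

/-- action at time `t` (index clamped to the horizon). -/
def ac (τ : M.Traj) (t : ℕ) : A := τ.2.1 ⟨min t M.T, by omega⟩

/-- reward at time `t` (index clamped to the horizon). -/
def rew (τ : M.Traj) (t : ℕ) : ℝ := M.rval (τ.2.2 ⟨min t M.T, by omega⟩)

/-- probability of a trajectory when actions are taken according to `π`. -/
def prob (π : S → A → ℝ) (τ : M.Traj) : ℝ :=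
  (if M.st τ 0 = M.s0 then (1:ℝ) else 0) *
  ∏ t ∈ range (M.T + 1),
    (π (M.st τ t) (M.ac τ t) * M.Rd (M.st τ t) (M.ac τ t) (τ.2.2 ⟨min t M.T, by omega⟩) *
      M.P (M.st τ t) (M.ac τ t) (M.st τ (t + 1)))

/-- discounted return `Σ_{t=0}^T γ^t r_t` of a trajectory. -/
def ret (τ : M.Traj) : ℝ := ∑ t ∈ range (M.T + 1), M.γ ^ t * M.rew τ t

/-- expected return `J(π)`. -/
def J (π : S → A → ℝ) : ℝ := ∑ τ : M.Traj, M.prob π τ * M.ret τ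

end FinMDP

section Auxiliary

lemma marg {ι α : Type*} [Fintype ι] [Fintype α] [DecidableEq ι] (u : ι)
    (F : (ι → α) → α → ℝ) (hF : ∀ g b a, F (Function.update g u b) a = F g a) :
    ∑ g : ι → α, ∑ a : α, F g a = (Fintype.card α : ℝ) * ∑ g : ι → α, F g (g u) := by
  rcases isEmpty_or_nonempty α with hα | hα
  · simp
  inhabit α
  set e := Equiv.piSplitAt u (fun _ : ι => α) with he
  have hsymm : ∀ (b : α) (h : {j // j ≠ u} → α), e.symm (b, h) = Function.update (e.symm (default, h)) u b := by
    intro b h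
    funext j
    simp only [he, Equiv.piSplitAt_symm_apply, Function.update]
    by_cases hj : j = u <;> simp [hj]
  have hu : ∀ (p : α × ({j // j ≠ u} → α)), e.symm p u = p.1 := by
    intro p; simp [he, Equiv.piSplitAt_symm_apply]
  set G : ({j // j ≠ u} → α) → α → ℝ := fun h a => F (e.symm (default, h)) a with hG
  have key : ∀ b h a, F (e.symm (b, h)) a = G h a := by
    intro b h a; rw [hsymm b h, hF]
  have L1 : ∑ g : ι → α, ∑ a : α, F g a = ∑ p : α × ({j // j ≠ u} → α), ∑ a, F (e.symm p) a :=
    (Equiv.sum_comp e.symm (fun g => ∑ a, F g a)).symm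
  have L2 : ∑ g : ι → α, F g (g u) = ∑ p : α × ({j // j ≠ u} → α), F (e.symm p) (e.symm p u) :=
    (Equiv.sum_comp e.symm (fun g => F g (g u))).symm
  rw [L1, L2]
  rw [Fintype.sum_prod_type, Fintype.sum_prod_type]
  have R1 : ∀ (b : α), ∑ h : {j // j ≠ u} → α, F (e.symm (b,h)) (e.symm (b,h) u) = ∑ h, G h b := by
    intro b; apply Finset.sum_congr rfl; intro h _; rw [hu, key]
  calc ∑ b : α, ∑ h : {j // j ≠ u} → α, ∑ a, F (e.symm (b,h)) a
      = ∑ b : α, ∑ h : {j // j ≠ u} → α, ∑ a, G h a := by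
        apply Finset.sum_congr rfl; intro b _; apply Finset.sum_congr rfl; intro h _
        exact Finset.sum_congr rfl fun a _ => key b h a
    _ = (Fintype.card α : ℝ) * ∑ h : {j // j ≠ u} → α, ∑ a, G h a := by
        rw [Finset.sum_const, card_univ, nsmul_eq_mul]
    _ = (Fintype.card α : ℝ) * ∑ b : α, ∑ h : {j // j ≠ u} → α, F (e.symm (b,h)) (e.symm (b,h) u) := by
        congr 1
        rw [Finset.sum_comm]
        apply Finset.sum_congr rfl; intro h _
        rw [← R1]

variable {S A Rw : Type} [Fintype S] [Fintype A] [Fintype Rw] [DecidableEq S] [DecidableEq A]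

namespace FinMDP

variable (M : FinMDP S A Rw)

/-- reward outcome coordinate -/
def rcd (τ : M.Traj) (t : ℕ) : Rw := τ.2.2 ⟨min t M.T, by omega⟩

/-- generalized (time-inhomogeneous-policy) partial trajectory weight -/
def gwp (w : ℕ → S → A → ℝ) (n : ℕ) (τ : M.Traj) : ℝ :=
  (if M.st τ 0 = M.s0 then (1:ℝ) else 0) *
  ∏ t ∈ range n, (w t (M.st τ t) (M.ac τ t) * M.Rd (M.st τ t) (M.ac τ t) (M.rcd τ t) *
    M.P (M.st τ t) (M.ac τ t) (M.st τ (t+1)))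

lemma prob_eq_gwp (π : S → A → ℝ) (τ : M.Traj) :
    M.prob π τ = M.gwp (fun _ => π) (M.T + 1) τ := rfl

lemma gwp_succ (w : ℕ → S → A → ℝ) (n : ℕ) (τ : M.Traj) :
    M.gwp w (n+1) τ = M.gwp w n τ * (w n (M.st τ n) (M.ac τ n) *
      M.Rd (M.st τ n) (M.ac τ n) (M.rcd τ n) * M.P (M.st τ n) (M.ac τ n) (M.st τ (n+1))) := by
  simp [gwp, prod_range_succ, mul_assoc]

lemma gwp_congr {w w' : ℕ → S → A → ℝ} {n : ℕ} (h : ∀ u, u < n → w u = w' u) (τ : M.Traj) :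
    M.gwp w n τ = M.gwp w' n τ := by
  unfold gwp
  congr 1
  exact Finset.prod_congr rfl fun t ht => by rw [h t (mem_range.mp ht)]

/-- `f` depends only on the trajectory prefix `s₀,a₀,r₀,…,s_n`. -/
def Meas (n : ℕ) (f : M.Traj → ℝ) : Prop :=
  ∀ τ τ' : M.Traj, (∀ i, i ≤ n → M.st τ i = M.st τ' i) → (∀ i, i < n → M.ac τ i = M.ac τ' i) →
    (∀ i, i < n → M.rcd τ i = M.rcd τ' i) → f τ = f τ'

lemma meas_mono {n m : ℕ} (hnm : n ≤ m) {f : M.Traj → ℝ} (hf : M.Meas n f) : M.Meas m f :=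
  fun τ τ' h1 h2 h3 => hf τ τ' (fun i hi => h1 i (hi.trans hnm))
    (fun i hi => h2 i (hi.trans_le hnm)) (fun i hi => h3 i (hi.trans_le hnm))

lemma traj_sum (h : M.Traj → ℝ) : ∑ τ : M.Traj, h τ =
    ∑ sf : Fin (M.T+2) → S, ∑ af : Fin (M.T+1) → A, ∑ rf : Fin (M.T+1) → Rw, h (sf, af, rf) := by
  rw [show (∑ τ : M.Traj, h τ) =
    ∑ τ : ((Fin (M.T+2) → S) × (Fin (M.T+1) → A) × (Fin (M.T+1) → Rw)), h τ from rfl]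
  erw [Fintype.sum_prod_type]
  exact Finset.sum_congr rfl fun sf _ => Fintype.sum_prod_type _

-- coordinate access
lemma st_mk (sf : Fin (M.T+2) → S) (af : Fin (M.T+1) → A) (rf : Fin (M.T+1) → Rw) (t : ℕ) :
    M.st (sf, af, rf) t = sf ⟨min t (M.T+1), by omega⟩ := rfl
lemma ac_mk (sf : Fin (M.T+2) → S) (af : Fin (M.T+1) → A) (rf : Fin (M.T+1) → Rw) (t : ℕ) :
    M.ac (sf, af, rf) t = af ⟨min t M.T, by omega⟩ := rfl
lemma rcd_mk (sf : Fin (M.T+2) → S) (af : Fin (M.T+1) → A) (rf : Fin (M.T+1) → Rw) (t : ℕ) :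
    M.rcd (sf, af, rf) t = rf ⟨min t M.T, by omega⟩ := rfl

-- invariance of coordinates under updates
lemma ac_update (sf : Fin (M.T+2) → S) (af : Fin (M.T+1) → A) (rf : Fin (M.T+1) → Rw)
    (u : Fin (M.T+1)) (b : A) (i : ℕ) (hi : i < u.val) :
    M.ac (sf, Function.update af u b, rf) i = M.ac (sf, af, rf) i := by
  have hu : u.val ≤ M.T := by omega
  rw [ac_mk, ac_mk]
  rw [Function.update_of_ne]
  exact fun h => absurd (Fin.val_eq_of_eq h) (by simp; omega)

lemma rcd_update (sf : Fin (M.T+2) → S) (af : Fin (M.T+1) → A) (rf : Fin (M.T+1) → Rw)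
    (u : Fin (M.T+1)) (b : Rw) (i : ℕ) (hi : i < u.val) :
    M.rcd (sf, af, Function.update rf u b) i = M.rcd (sf, af, rf) i := by
  have hu : u.val ≤ M.T := by omega
  rw [rcd_mk, rcd_mk]
  rw [Function.update_of_ne]
  exact fun h => absurd (Fin.val_eq_of_eq h) (by simp; omega)

lemma st_update (sf : Fin (M.T+2) → S) (af : Fin (M.T+1) → A) (rf : Fin (M.T+1) → Rw)
    (u : Fin (M.T+2)) (b : S) (i : ℕ) (hi : i < u.val) :
    M.st (Function.update sf u b, af, rf) i = M.st (sf, af, rf) i := by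
  have hu : u.val ≤ M.T + 1 := by omega
  rw [st_mk, st_mk]
  rw [Function.update_of_ne]
  exact fun h => absurd (Fin.val_eq_of_eq h) (by simp; omega)

-- gwp invariance under updates beyond level n
lemma gwp_update_af (w : ℕ → S → A → ℝ) (n : ℕ) (hn : n ≤ M.T)
    (sf : Fin (M.T+2) → S) (af : Fin (M.T+1) → A) (rf : Fin (M.T+1) → Rw) (b : A) :
    M.gwp w n (sf, Function.update af ⟨n, by omega⟩ b, rf) = M.gwp w n (sf, af, rf) := by
  unfold gwp
  congr 1
  refine Finset.prod_congr rfl fun t ht => ?_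
  have ht' : t < n := mem_range.mp ht
  rw [show M.ac (sf, Function.update af ⟨n, by omega⟩ b, rf) t = M.ac (sf, af, rf) t from
    M.ac_update sf af rf ⟨n, by omega⟩ b t ht']
  rfl

lemma gwp_update_rf (w : ℕ → S → A → ℝ) (n : ℕ) (hn : n ≤ M.T)
    (sf : Fin (M.T+2) → S) (af : Fin (M.T+1) → A) (rf : Fin (M.T+1) → Rw) (b : Rw) :
    M.gwp w n (sf, af, Function.update rf ⟨n, by omega⟩ b) = M.gwp w n (sf, af, rf) := by
  unfold gwp
  congr 1
  refine Finset.prod_congr rfl fun t ht => ?_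
  have ht' : t < n := mem_range.mp ht
  rw [show M.rcd (sf, af, Function.update rf ⟨n, by omega⟩ b) t = M.rcd (sf, af, rf) t from
    M.rcd_update sf af rf ⟨n, by omega⟩ b t ht']
  rfl

lemma gwp_update_sf (w : ℕ → S → A → ℝ) (n : ℕ) (hn : n ≤ M.T)
    (sf : Fin (M.T+2) → S) (af : Fin (M.T+1) → A) (rf : Fin (M.T+1) → Rw) (b : S) :
    M.gwp w n (Function.update sf ⟨n+1, by omega⟩ b, af, rf) = M.gwp w n (sf, af, rf) := by
  unfold gwp
  have h0 : M.st (Function.update sf ⟨n+1, by omega⟩ b, af, rf) 0 = M.st (sf, af, rf) 0 :=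
    M.st_update sf af rf ⟨n+1, by omega⟩ b 0 (by simp)
  rw [h0]
  congr 1
  refine Finset.prod_congr rfl fun t ht => ?_
  have ht' : t < n := mem_range.mp ht
  rw [M.st_update sf af rf ⟨n+1, by omega⟩ b t (by simp; omega),
      M.st_update sf af rf ⟨n+1, by omega⟩ b (t+1) (by simp; omega)]
  rfl

lemma sum_rot {α β γ : Type*} [Fintype α] [Fintype β] [Fintype γ] (h : α → β → γ → ℝ) :
    ∑ a : α, ∑ b : β, ∑ c : γ, h a b c = ∑ b : β, ∑ c : γ, ∑ a : α, h a b c :=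
  (Finset.sum_comm).trans (Finset.sum_congr rfl fun _ _ => Finset.sum_comm)

lemma stepx (hM : M.Valid) (w : ℕ → S → A → ℝ) {n : ℕ} (hn : n ≤ M.T)
    {f : M.Traj → ℝ} (hf : M.Meas n f) (g : S → A → ℝ) :
    ∑ τ : M.Traj, M.gwp w n τ * (f τ * ∑ a, w n (M.st τ n) a * g (M.st τ n) a)
    = (Fintype.card S * Fintype.card A * Fintype.card Rw : ℝ) *
      ∑ τ : M.Traj, M.gwp w (n+1) τ * (f τ * g (M.st τ n) (M.ac τ n)) := by
  obtain ⟨-, hP, -, hRd⟩ := hM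
  have hfa : ∀ (sf : Fin (M.T+2) → S) (af : Fin (M.T+1) → A) (rf : Fin (M.T+1) → Rw) (b : A),
      f (sf, Function.update af ⟨n, by omega⟩ b, rf) = f (sf, af, rf) := fun sf af rf b =>
    hf _ _ (fun i _ => rfl) (fun i hi => M.ac_update sf af rf ⟨n, by omega⟩ b i hi)
      (fun i _ => rfl)
  have hfr : ∀ (sf : Fin (M.T+2) → S) (af : Fin (M.T+1) → A) (rf : Fin (M.T+1) → Rw) (b : Rw),
      f (sf, af, Function.update rf ⟨n, by omega⟩ b) = f (sf, af, rf) := fun sf af rf b =>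
    hf _ _ (fun i _ => rfl) (fun i _ => rfl)
      (fun i hi => M.rcd_update sf af rf ⟨n, by omega⟩ b i hi)
  have hfs : ∀ (sf : Fin (M.T+2) → S) (af : Fin (M.T+1) → A) (rf : Fin (M.T+1) → Rw) (b : S),
      f (Function.update sf ⟨n+1, by omega⟩ b, af, rf) = f (sf, af, rf) := fun sf af rf b =>
    hf _ _ (fun i hi => M.st_update sf af rf ⟨n+1, by omega⟩ b i (by simp; omega))
      (fun i _ => rfl) (fun i _ => rfl)
  have hacu : ∀ (sf : Fin (M.T+2) → S) (af : Fin (M.T+1) → A) (rf : Fin (M.T+1) → Rw),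
      M.ac (sf, af, rf) n = af ⟨n, by omega⟩ := fun sf af rf => by
    rw [ac_mk]; exact congrArg af (Fin.ext (min_eq_left hn))
  have hrcu : ∀ (sf : Fin (M.T+2) → S) (af : Fin (M.T+1) → A) (rf : Fin (M.T+1) → Rw),
      M.rcd (sf, af, rf) n = rf ⟨n, by omega⟩ := fun sf af rf => by
    rw [rcd_mk]; exact congrArg rf (Fin.ext (min_eq_left hn))
  have hstu : ∀ (sf : Fin (M.T+2) → S) (af : Fin (M.T+1) → A) (rf : Fin (M.T+1) → Rw),
      M.st (sf, af, rf) (n+1) = sf ⟨n+1, by omega⟩ := fun sf af rf => by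
    rw [st_mk]; exact congrArg sf (Fin.ext (min_eq_left (by omega)))
  -- Step 1: marginalize the action
  have E1 : ∀ (sf : Fin (M.T+2) → S) (rf : Fin (M.T+1) → Rw),
      ∑ af : Fin (M.T+1) → A, M.gwp w n (sf,af,rf) *
        (f (sf,af,rf) * ∑ a, w n (M.st (sf,af,rf) n) a * g (M.st (sf,af,rf) n) a)
      = (Fintype.card A : ℝ) * ∑ af : Fin (M.T+1) → A, M.gwp w n (sf,af,rf) * f (sf,af,rf) *
          (w n (M.st (sf,af,rf) n) (M.ac (sf,af,rf) n) * g (M.st (sf,af,rf) n) (M.ac (sf,af,rf) n)) := by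
    intro sf rf
    have hm := marg (⟨n, by omega⟩ : Fin (M.T+1))
      (fun af a => M.gwp w n (sf,af,rf) * f (sf,af,rf) *
        (w n (M.st (sf,af,rf) n) a * g (M.st (sf,af,rf) n) a))
      (by intro af b a; beta_reduce; erw [M.gwp_update_af w n hn, hfa]; rfl)
    calc ∑ af : Fin (M.T+1) → A, M.gwp w n (sf,af,rf) *
          (f (sf,af,rf) * ∑ a, w n (M.st (sf,af,rf) n) a * g (M.st (sf,af,rf) n) a)
        = ∑ af : Fin (M.T+1) → A, ∑ a, M.gwp w n (sf,af,rf) * f (sf,af,rf) *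
            (w n (M.st (sf,af,rf) n) a * g (M.st (sf,af,rf) n) a) := by
          refine sum_congr rfl fun af _ => ?_
          rw [Finset.mul_sum, Finset.mul_sum]
          exact sum_congr rfl fun a _ => by ring
      _ = (Fintype.card A : ℝ) * ∑ af : Fin (M.T+1) → A, M.gwp w n (sf,af,rf) * f (sf,af,rf) *
            (w n (M.st (sf,af,rf) n) (af ⟨n, by omega⟩) * g (M.st (sf,af,rf) n) (af ⟨n, by omega⟩)) := hm
      _ = _ := by
          refine congrArg _ (sum_congr rfl fun af _ => ?_)
          rw [hacu]
  -- Step 2: marginalize the reward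
  have E2 : ∀ (sf : Fin (M.T+2) → S) (af : Fin (M.T+1) → A),
      ∑ rf : Fin (M.T+1) → Rw, M.gwp w n (sf,af,rf) * f (sf,af,rf) *
          (w n (M.st (sf,af,rf) n) (M.ac (sf,af,rf) n) * g (M.st (sf,af,rf) n) (M.ac (sf,af,rf) n))
      = (Fintype.card Rw : ℝ) * ∑ rf : Fin (M.T+1) → Rw, M.gwp w n (sf,af,rf) * f (sf,af,rf) *
          (w n (M.st (sf,af,rf) n) (M.ac (sf,af,rf) n) * g (M.st (sf,af,rf) n) (M.ac (sf,af,rf) n)) *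
          M.Rd (M.st (sf,af,rf) n) (M.ac (sf,af,rf) n) (M.rcd (sf,af,rf) n) := by
    intro sf af
    have hm := marg (⟨n, by omega⟩ : Fin (M.T+1))
      (fun rf r => M.gwp w n (sf,af,rf) * f (sf,af,rf) *
          (w n (M.st (sf,af,rf) n) (M.ac (sf,af,rf) n) * g (M.st (sf,af,rf) n) (M.ac (sf,af,rf) n)) *
          M.Rd (M.st (sf,af,rf) n) (M.ac (sf,af,rf) n) r)
      (by intro rf b r; beta_reduce; erw [M.gwp_update_rf w n hn, hfr]; rfl)
    calc ∑ rf : Fin (M.T+1) → Rw, M.gwp w n (sf,af,rf) * f (sf,af,rf) *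
          (w n (M.st (sf,af,rf) n) (M.ac (sf,af,rf) n) * g (M.st (sf,af,rf) n) (M.ac (sf,af,rf) n))
        = ∑ rf : Fin (M.T+1) → Rw, ∑ r, M.gwp w n (sf,af,rf) * f (sf,af,rf) *
            (w n (M.st (sf,af,rf) n) (M.ac (sf,af,rf) n) * g (M.st (sf,af,rf) n) (M.ac (sf,af,rf) n)) *
            M.Rd (M.st (sf,af,rf) n) (M.ac (sf,af,rf) n) r := by
          refine sum_congr rfl fun rf _ => ?_
          rw [← Finset.mul_sum, hRd, mul_one]
      _ = (Fintype.card Rw : ℝ) * _ := hm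
      _ = _ := by
          refine congrArg _ (sum_congr rfl fun rf _ => ?_)
          rw [hrcu]
  -- Step 3: marginalize the next state
  have E3 : ∀ (af : Fin (M.T+1) → A) (rf : Fin (M.T+1) → Rw),
      ∑ sf : Fin (M.T+2) → S, M.gwp w n (sf,af,rf) * f (sf,af,rf) *
          (w n (M.st (sf,af,rf) n) (M.ac (sf,af,rf) n) * g (M.st (sf,af,rf) n) (M.ac (sf,af,rf) n)) *
          M.Rd (M.st (sf,af,rf) n) (M.ac (sf,af,rf) n) (M.rcd (sf,af,rf) n)
      = (Fintype.card S : ℝ) * ∑ sf : Fin (M.T+2) → S, M.gwp w n (sf,af,rf) * f (sf,af,rf) *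
          (w n (M.st (sf,af,rf) n) (M.ac (sf,af,rf) n) * g (M.st (sf,af,rf) n) (M.ac (sf,af,rf) n)) *
          M.Rd (M.st (sf,af,rf) n) (M.ac (sf,af,rf) n) (M.rcd (sf,af,rf) n) *
          M.P (M.st (sf,af,rf) n) (M.ac (sf,af,rf) n) (M.st (sf,af,rf) (n+1)) := by
    intro af rf
    have hm := marg (⟨n+1, by omega⟩ : Fin (M.T+2))
      (fun sf s' => M.gwp w n (sf,af,rf) * f (sf,af,rf) *
          (w n (M.st (sf,af,rf) n) (M.ac (sf,af,rf) n) * g (M.st (sf,af,rf) n) (M.ac (sf,af,rf) n)) *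
          M.Rd (M.st (sf,af,rf) n) (M.ac (sf,af,rf) n) (M.rcd (sf,af,rf) n) *
          M.P (M.st (sf,af,rf) n) (M.ac (sf,af,rf) n) s')
      (by intro sf b s'; beta_reduce
          erw [M.gwp_update_sf w n hn, hfs,
            M.st_update sf af rf ⟨n+1, by omega⟩ b n (by simp)]
          rfl)
    calc ∑ sf : Fin (M.T+2) → S, M.gwp w n (sf,af,rf) * f (sf,af,rf) *
          (w n (M.st (sf,af,rf) n) (M.ac (sf,af,rf) n) * g (M.st (sf,af,rf) n) (M.ac (sf,af,rf) n)) *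
          M.Rd (M.st (sf,af,rf) n) (M.ac (sf,af,rf) n) (M.rcd (sf,af,rf) n)
        = ∑ sf : Fin (M.T+2) → S, ∑ s', M.gwp w n (sf,af,rf) * f (sf,af,rf) *
            (w n (M.st (sf,af,rf) n) (M.ac (sf,af,rf) n) * g (M.st (sf,af,rf) n) (M.ac (sf,af,rf) n)) *
            M.Rd (M.st (sf,af,rf) n) (M.ac (sf,af,rf) n) (M.rcd (sf,af,rf) n) *
            M.P (M.st (sf,af,rf) n) (M.ac (sf,af,rf) n) s' := by
          refine sum_congr rfl fun sf _ => ?_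
          rw [← Finset.mul_sum, hP, mul_one]
      _ = (Fintype.card S : ℝ) * _ := hm
      _ = _ := by
          refine congrArg _ (sum_congr rfl fun sf _ => ?_)
          rw [hstu]
  -- assemble
  calc ∑ τ : M.Traj, M.gwp w n τ * (f τ * ∑ a, w n (M.st τ n) a * g (M.st τ n) a)
      = ∑ sf, ∑ af, ∑ rf, M.gwp w n (sf,af,rf) *
          (f (sf,af,rf) * ∑ a, w n (M.st (sf,af,rf) n) a * g (M.st (sf,af,rf) n) a) := M.traj_sum _
    _ = ∑ sf, ∑ rf, ∑ af, M.gwp w n (sf,af,rf) *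
          (f (sf,af,rf) * ∑ a, w n (M.st (sf,af,rf) n) a * g (M.st (sf,af,rf) n) a) :=
        sum_congr rfl fun sf _ => Finset.sum_comm
    _ = ∑ sf, ∑ rf, ((Fintype.card A : ℝ) * ∑ af, M.gwp w n (sf,af,rf) * f (sf,af,rf) *
          (w n (M.st (sf,af,rf) n) (M.ac (sf,af,rf) n) * g (M.st (sf,af,rf) n) (M.ac (sf,af,rf) n))) :=
        sum_congr rfl fun sf _ => sum_congr rfl fun rf _ => E1 sf rf
    _ = (Fintype.card A : ℝ) * ∑ sf, ∑ rf, ∑ af, M.gwp w n (sf,af,rf) * f (sf,af,rf) *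
          (w n (M.st (sf,af,rf) n) (M.ac (sf,af,rf) n) * g (M.st (sf,af,rf) n) (M.ac (sf,af,rf) n)) := by
        rw [Finset.mul_sum]
        exact sum_congr rfl fun sf _ => by rw [Finset.mul_sum]
    _ = (Fintype.card A : ℝ) * ∑ sf, ∑ af, ∑ rf, M.gwp w n (sf,af,rf) * f (sf,af,rf) *
          (w n (M.st (sf,af,rf) n) (M.ac (sf,af,rf) n) * g (M.st (sf,af,rf) n) (M.ac (sf,af,rf) n)) :=
        congrArg _ (sum_congr rfl fun sf _ => Finset.sum_comm)
    _ = (Fintype.card A : ℝ) * ∑ sf, ∑ af, ((Fintype.card Rw : ℝ) * ∑ rf,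
          M.gwp w n (sf,af,rf) * f (sf,af,rf) *
          (w n (M.st (sf,af,rf) n) (M.ac (sf,af,rf) n) * g (M.st (sf,af,rf) n) (M.ac (sf,af,rf) n)) *
          M.Rd (M.st (sf,af,rf) n) (M.ac (sf,af,rf) n) (M.rcd (sf,af,rf) n)) :=
        congrArg _ (sum_congr rfl fun sf _ => sum_congr rfl fun af _ => E2 sf af)
    _ = (Fintype.card A : ℝ) * ((Fintype.card Rw : ℝ) * ∑ sf, ∑ af, ∑ rf,
          M.gwp w n (sf,af,rf) * f (sf,af,rf) *
          (w n (M.st (sf,af,rf) n) (M.ac (sf,af,rf) n) * g (M.st (sf,af,rf) n) (M.ac (sf,af,rf) n)) *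
          M.Rd (M.st (sf,af,rf) n) (M.ac (sf,af,rf) n) (M.rcd (sf,af,rf) n)) := by
        congr 1
        rw [Finset.mul_sum]
        exact sum_congr rfl fun sf _ => by rw [Finset.mul_sum]
    _ = (Fintype.card A : ℝ) * ((Fintype.card Rw : ℝ) * ∑ af, ∑ rf, ∑ sf,
          M.gwp w n (sf,af,rf) * f (sf,af,rf) *
          (w n (M.st (sf,af,rf) n) (M.ac (sf,af,rf) n) * g (M.st (sf,af,rf) n) (M.ac (sf,af,rf) n)) *
          M.Rd (M.st (sf,af,rf) n) (M.ac (sf,af,rf) n) (M.rcd (sf,af,rf) n)) := by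
        exact congrArg _ (congrArg _ (sum_rot _))
    _ = (Fintype.card A : ℝ) * ((Fintype.card Rw : ℝ) * ∑ af, ∑ rf, ((Fintype.card S : ℝ) * ∑ sf,
          M.gwp w n (sf,af,rf) * f (sf,af,rf) *
          (w n (M.st (sf,af,rf) n) (M.ac (sf,af,rf) n) * g (M.st (sf,af,rf) n) (M.ac (sf,af,rf) n)) *
          M.Rd (M.st (sf,af,rf) n) (M.ac (sf,af,rf) n) (M.rcd (sf,af,rf) n) *
          M.P (M.st (sf,af,rf) n) (M.ac (sf,af,rf) n) (M.st (sf,af,rf) (n+1)))) :=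
        congrArg _ (congrArg _ (sum_congr rfl fun af _ => sum_congr rfl fun rf _ => E3 af rf))
    _ = (Fintype.card A : ℝ) * ((Fintype.card Rw : ℝ) * ((Fintype.card S : ℝ) * ∑ af, ∑ rf, ∑ sf,
          M.gwp w n (sf,af,rf) * f (sf,af,rf) *
          (w n (M.st (sf,af,rf) n) (M.ac (sf,af,rf) n) * g (M.st (sf,af,rf) n) (M.ac (sf,af,rf) n)) *
          M.Rd (M.st (sf,af,rf) n) (M.ac (sf,af,rf) n) (M.rcd (sf,af,rf) n) *
          M.P (M.st (sf,af,rf) n) (M.ac (sf,af,rf) n) (M.st (sf,af,rf) (n+1)))) := by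
        refine congrArg _ (congrArg _ ?_)
        rw [Finset.mul_sum]
        exact sum_congr rfl fun af _ => by rw [Finset.mul_sum]
    _ = (Fintype.card A : ℝ) * ((Fintype.card Rw : ℝ) * ((Fintype.card S : ℝ) * ∑ sf, ∑ af, ∑ rf,
          M.gwp w n (sf,af,rf) * f (sf,af,rf) *
          (w n (M.st (sf,af,rf) n) (M.ac (sf,af,rf) n) * g (M.st (sf,af,rf) n) (M.ac (sf,af,rf) n)) *
          M.Rd (M.st (sf,af,rf) n) (M.ac (sf,af,rf) n) (M.rcd (sf,af,rf) n) *
          M.P (M.st (sf,af,rf) n) (M.ac (sf,af,rf) n) (M.st (sf,af,rf) (n+1)))) := by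
        exact congrArg _ (congrArg _ (congrArg _ (sum_rot _).symm))
    _ = (Fintype.card A : ℝ) * ((Fintype.card Rw : ℝ) * ((Fintype.card S : ℝ) * ∑ sf, ∑ af, ∑ rf,
          M.gwp w (n+1) (sf,af,rf) * (f (sf,af,rf) * g (M.st (sf,af,rf) n) (M.ac (sf,af,rf) n)))) := by
        refine congrArg _ (congrArg _ (congrArg _ (sum_congr rfl fun sf _ => sum_congr rfl fun af _ =>
          sum_congr rfl fun rf _ => ?_)))
        erw [M.gwp_succ]
        ring
    _ = (Fintype.card S * Fintype.card A * Fintype.card Rw : ℝ) *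
          ∑ τ : M.Traj, M.gwp w (n+1) τ * (f τ * g (M.st τ n) (M.ac τ n)) := by
        rw [M.traj_sum (fun τ => M.gwp w (n+1) τ * (f τ * g (M.st τ n) (M.ac τ n)))]
        ring


lemma reduce (hM : M.Valid) (w : ℕ → S → A → ℝ) {n k : ℕ} (hk : n + k ≤ M.T + 1)
    (hw : ∀ u s, n ≤ u → u ≤ M.T → ∑ a, w u s a = 1)
    {f : M.Traj → ℝ} (hf : M.Meas n f) :
    ∑ τ : M.Traj, M.gwp w n τ * f τ =
      (Fintype.card S * Fintype.card A * Fintype.card Rw : ℝ)^k *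
        ∑ τ : M.Traj, M.gwp w (n+k) τ * f τ := by
  induction k with
  | zero => simp
  | succ k ih =>
    have hk' : n + k ≤ M.T := by omega
    rw [ih (by omega)]
    have hs := M.stepx (by exact ⟨hM.1, hM.2.1, hM.2.2.1, hM.2.2.2⟩) w (n := n + k) hk'
      (M.meas_mono (Nat.le_add_right n k) hf) (fun _ _ => 1)
    have hL : ∀ τ : M.Traj, f τ * ∑ a, w (n+k) (M.st τ (n+k)) a = f τ := fun τ => by
      rw [hw (n+k) (M.st τ (n+k)) (Nat.le_add_right n k) hk', mul_one]
    simp only [mul_one] at hs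
    simp only [hL] at hs
    rw [show n + (k+1) = n + k + 1 from rfl, pow_succ, hs]
    ring

lemma gwp_zero (w : ℕ → S → A → ℝ) (h : S → ℝ) :
    (Fintype.card S : ℝ) * ∑ τ : M.Traj, M.gwp w 0 τ * h (M.st τ 0)
      = (Fintype.card S : ℝ) *
        ((Fintype.card S * Fintype.card A * Fintype.card Rw : ℝ)^(M.T+1) * h M.s0) := by
  have hst0 : ∀ (sf : Fin (M.T+2) → S) (af : Fin (M.T+1) → A) (rf : Fin (M.T+1) → Rw),
      M.st (sf, af, rf) 0 = sf ⟨0, by omega⟩ := fun sf af rf => by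
    rw [st_mk]; exact congrArg sf (Fin.ext (Nat.zero_min _))
  have key : (Fintype.card S : ℝ) * ∑ sf : Fin (M.T+2) → S,
      (if sf ⟨0, by omega⟩ = M.s0 then (1:ℝ) else 0) * h (sf ⟨0, by omega⟩)
      = (Fintype.card S : ℝ)^(M.T+2) * h M.s0 := by
    have hm := marg (⟨0, by omega⟩ : Fin (M.T+2))
      (fun (_ : Fin (M.T+2) → S) (s : S) => if s = M.s0 then h s else 0)
      (fun g b a => rfl)
    have h1 : ∀ sf : Fin (M.T+2) → S,
        (∑ s : S, if s = M.s0 then h s else 0) = h M.s0 := fun sf => by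
      rw [Finset.sum_ite_eq' univ M.s0 h]; simp
    have h2 : ∀ sf : Fin (M.T+2) → S,
        (if (sf ⟨0, by omega⟩) = M.s0 then h (sf ⟨0, by omega⟩) else 0)
        = (if sf ⟨0, by omega⟩ = M.s0 then (1:ℝ) else 0) * h (sf ⟨0, by omega⟩) := fun sf => by
      split_ifs <;> simp
    calc (Fintype.card S : ℝ) * ∑ sf : Fin (M.T+2) → S,
        (if sf ⟨0, by omega⟩ = M.s0 then (1:ℝ) else 0) * h (sf ⟨0, by omega⟩)
        = (Fintype.card S : ℝ) * ∑ sf : Fin (M.T+2) → S,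
            (if sf ⟨0, by omega⟩ = M.s0 then h (sf ⟨0, by omega⟩) else 0) := by
          congr 1; exact Finset.sum_congr rfl fun sf _ => (h2 sf).symm
      _ = ∑ sf : Fin (M.T+2) → S, ∑ s : S, (if s = M.s0 then h s else 0) := hm.symm
      _ = ∑ sf : Fin (M.T+2) → S, h M.s0 := Finset.sum_congr rfl fun sf _ => h1 sf
      _ = (Fintype.card S : ℝ)^(M.T+2) * h M.s0 := by
          rw [Finset.sum_const, card_univ]
          have : Fintype.card (Fin (M.T+2) → S) = Fintype.card S ^ (M.T+2) := by
            rw [Fintype.card_fun, Fintype.card_fin]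
          rw [this]
          push_cast
          ring
  rw [M.traj_sum (fun τ => M.gwp w 0 τ * h (M.st τ 0))]
  have body : ∀ (sf : Fin (M.T+2) → S) (af : Fin (M.T+1) → A) (rf : Fin (M.T+1) → Rw),
      M.gwp w 0 (sf,af,rf) * h (M.st (sf,af,rf) 0)
      = (if sf ⟨0, by omega⟩ = M.s0 then (1:ℝ) else 0) * h (sf ⟨0, by omega⟩) := by
    intro sf af rf
    rw [hst0]
    simp only [gwp, range_zero, prod_empty, mul_one, hst0]
  calc (Fintype.card S : ℝ) * ∑ sf : Fin (M.T+2) → S, ∑ af : Fin (M.T+1) → A,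
        ∑ rf : Fin (M.T+1) → Rw, M.gwp w 0 (sf,af,rf) * h (M.st (sf,af,rf) 0)
      = (Fintype.card S : ℝ) * ∑ sf : Fin (M.T+2) → S, ∑ af : Fin (M.T+1) → A, ∑ rf : Fin (M.T+1) → Rw,
          (if sf ⟨0, by omega⟩ = M.s0 then (1:ℝ) else 0) * h (sf ⟨0, by omega⟩) := by
        congr 1
        exact Finset.sum_congr rfl fun sf _ => Finset.sum_congr rfl fun af _ =>
          Finset.sum_congr rfl fun rf _ => body sf af rf
    _ = (Fintype.card A : ℝ)^(M.T+1) * (Fintype.card Rw : ℝ)^(M.T+1) *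
          ((Fintype.card S : ℝ) * ∑ sf : Fin (M.T+2) → S,
            (if sf ⟨0, by omega⟩ = M.s0 then (1:ℝ) else 0) * h (sf ⟨0, by omega⟩)) := by
        simp only [Finset.sum_const, card_univ, nsmul_eq_mul]
        have hA : Fintype.card (Fin (M.T+1) → A) = Fintype.card A ^ (M.T+1) := by
          rw [Fintype.card_fun, Fintype.card_fin]
        have hR : Fintype.card (Fin (M.T+1) → Rw) = Fintype.card Rw ^ (M.T+1) := by
          rw [Fintype.card_fun, Fintype.card_fin]
        rw [hA, hR]
        push_cast
        simp only [Finset.mul_sum]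
        apply Finset.sum_congr rfl
        intro x _
        ring
    _ = (Fintype.card A : ℝ)^(M.T+1) * (Fintype.card Rw : ℝ)^(M.T+1) *
          ((Fintype.card S : ℝ)^(M.T+2) * h M.s0) := by rw [key]
    _ = (Fintype.card S : ℝ) *
          ((Fintype.card S * Fintype.card A * Fintype.card Rw : ℝ)^(M.T+1) * h M.s0) := by
        rw [show M.T + 2 = (M.T+1) + 1 from rfl]
        push_cast
        ring


/-- the hybrid policy: `π'` up to time `t`, `π` afterwards. -/
def hybW (π π' : S → A → ℝ) (t : ℕ) : ℕ → S → A → ℝ := fun u => if u ≤ t then π' else π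

lemma hybW_le {π π' : S → A → ℝ} {t u : ℕ} (h : u ≤ t) : hybW π π' t u = π' := if_pos h
lemma hybW_gt {π π' : S → A → ℝ} {t u : ℕ} (h : t < u) : hybW π π' t u = π := if_neg (by omega)

lemma hyb_weight (π π' : S → A → ℝ) (hπpos : ∀ s a, 0 < π s a) {t : ℕ} (ht : t ≤ M.T)
    (τ : M.Traj) :
    M.prob π τ * ∏ t' ∈ range (t + 1), π' (M.st τ t') (M.ac τ t') / π (M.st τ t') (M.ac τ t')
    = M.gwp (hybW π π' t) (M.T + 1) τ := by
  rw [prob_eq_gwp]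
  unfold gwp
  rw [mul_assoc]
  congr 1
  have hsplit : ∀ (F : ℕ → ℝ), ∏ u ∈ range (M.T+1), F u =
      (∏ u ∈ range (t+1), F u) * ∏ u ∈ Ico (t+1) (M.T+1), F u := by
    intro F
    rw [range_eq_Ico,
      ← Finset.prod_Ico_consecutive F (Nat.zero_le (t+1)) (by omega : t+1 ≤ M.T+1), ← range_eq_Ico]
  rw [hsplit (fun u => (fun _ => π) u (M.st τ u) (M.ac τ u) * M.Rd (M.st τ u) (M.ac τ u) (M.rcd τ u) *
        M.P (M.st τ u) (M.ac τ u) (M.st τ (u+1))),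
      hsplit (fun u => hybW π π' t u (M.st τ u) (M.ac τ u) * M.Rd (M.st τ u) (M.ac τ u) (M.rcd τ u) *
        M.P (M.st τ u) (M.ac τ u) (M.st τ (u+1)))]
  rw [mul_right_comm, ← Finset.prod_mul_distrib]
  congr 1
  · refine Finset.prod_congr rfl fun u hu => ?_
    have hu' : u ≤ t := by have := mem_range.mp hu; omega
    rw [hybW_le hu']
    have hne : π (M.st τ u) (M.ac τ u) ≠ 0 := ne_of_gt (hπpos _ _)
    field_simp
  · refine Finset.prod_congr rfl fun u hu => ?_
    have hu' : t < u := by have := (mem_Ico.mp hu).1; omega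
    rw [hybW_gt hu']


end FinMDP

end Auxiliary

open FinMDP

/-- the doubly robust estimator
`Ĵ(π') = Ṽ(s₀) + Σ_{t=0}^T γ^t ρ_{[0:t]} (r_t + γ Ṽ(s_{t+1}) − Q̃(s_t,a_t))`,
with `Ṽ(s) := E_{a~π'(s)}[Q̃(s,a)]` and `Ṽ(s_{T+1}) = 0`, is unbiased for
`J(π')` under trajectories generated by `π`, for any `Q̃`. -/
theorem doubly_robust_unbiased (M : FinMDP S A Rw) (hM : M.Valid)
    (hγ0 : 0 ≤ M.γ) (hγ1 : M.γ < 1)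
    (π π' : S → A → ℝ) (hπ : IsPolicy π) (hπpos : ∀ s a, 0 < π s a) (hπ' : IsPolicy π')
    (Qt : S → A → ℝ) :
    ∑ τ : M.Traj, M.prob π τ *
      ((∑ a, π' M.s0 a * Qt M.s0 a) + ∑ t ∈ range (M.T + 1), M.γ ^ t *
        (∏ t' ∈ range (t + 1), π' (M.st τ t') (M.ac τ t') / π (M.st τ t') (M.ac τ t')) *
        (M.rew τ t
          + M.γ * (if t < M.T then ∑ a, π' (M.st τ (t + 1)) a * Qt (M.st τ (t + 1)) a else 0)
          - Qt (M.st τ t) (M.ac τ t)))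
      = M.J π' := by
  classical
  rcases isEmpty_or_nonempty S with hS | hS
  · have h1 : IsEmpty (Fin (M.T+2) → S) := ⟨fun f => hS.false (f ⟨0, by omega⟩)⟩
    haveI hTe : IsEmpty M.Traj := ⟨fun τ => h1.false τ.1⟩
    simp [FinMDP.J, Finset.univ_eq_empty]
  have hA : Nonempty A := by
    rcases isEmpty_or_nonempty A with hA | hA
    · exfalso
      have h1 := hπ.2 (Classical.arbitrary S)
      rw [Finset.univ_eq_empty, Finset.sum_empty] at h1
      exact one_ne_zero h1.symm
    · exact hA
  have hRw : Nonempty Rw := by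
    rcases isEmpty_or_nonempty Rw with hR | hR
    · exfalso
      have h1 := hM.2.2.2 (Classical.arbitrary S) (Classical.arbitrary A)
      rw [Finset.univ_eq_empty, Finset.sum_empty] at h1
      exact one_ne_zero h1.symm
    · exact hR
  have hSpos : (0:ℝ) < (Fintype.card S : ℝ) := by exact_mod_cast Fintype.card_pos
  have hApos : (0:ℝ) < (Fintype.card A : ℝ) := by exact_mod_cast Fintype.card_pos
  have hRpos : (0:ℝ) < (Fintype.card Rw : ℝ) := by exact_mod_cast Fintype.card_pos
  have hCne : (Fintype.card S * Fintype.card A * Fintype.card Rw : ℝ) ≠ 0 :=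
    ne_of_gt (mul_pos (mul_pos hSpos hApos) hRpos)
  -- normalization : total probability is 1
  have hone : M.Meas 0 (fun _ => (1:ℝ)) := fun _ _ _ _ _ => rfl
  have hnorm : ∑ τ : M.Traj, M.prob π τ = 1 := by
    have h1 := M.reduce hM (fun _ => π) (n := 0) (k := M.T+1) (by omega)
      (fun u s _ _ => hπ.2 s) hone
    simp only [zero_add, mul_one] at h1
    have h2 := M.gwp_zero (fun _ => π) (fun _ => (1:ℝ))
    simp only [mul_one] at h2
    have h3 : ∑ τ : M.Traj, M.gwp (fun _ => π) 0 τ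
        = (Fintype.card S * Fintype.card A * Fintype.card Rw : ℝ)^(M.T+1) :=
      mul_left_cancel₀ (ne_of_gt hSpos) h2
    rw [h3] at h1
    have h4 := mul_left_cancel₀ (pow_ne_zero (M.T+1) hCne) (by rw [mul_one]; exact h1 :
      (Fintype.card S * Fintype.card A * Fintype.card Rw : ℝ)^(M.T+1) * 1 =
      (Fintype.card S * Fintype.card A * Fintype.card Rw : ℝ)^(M.T+1) *
        ∑ τ : M.Traj, M.gwp (fun _ => π) (M.T+1) τ)
    calc ∑ τ : M.Traj, M.prob π τ = ∑ τ : M.Traj, M.gwp (fun _ => π) (M.T+1) τ :=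
          Finset.sum_congr rfl fun τ _ => M.prob_eq_gwp π τ
      _ = 1 := h4.symm
  -- rewards are correctly off-policy-corrected
  have measRew : ∀ t : ℕ, M.Meas (t+1) (fun τ => M.rew τ t) := fun t τ τ' _ _ hr =>
    congrArg M.rval (hr t (Nat.lt_succ_self t))
  have hA_eq : ∀ t, t ≤ M.T →
      (∑ τ : M.Traj, M.gwp (hybW π π' t) (M.T+1) τ * M.rew τ t)
      = ∑ τ : M.Traj, M.gwp (fun _ => π') (M.T+1) τ * M.rew τ t := by
    intro t ht
    have hred1 := M.reduce hM (hybW π π' t) (n := t+1) (k := M.T - t) (by omega)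
      (fun u s hu hu' => by rw [hybW_gt (by omega)]; exact hπ.2 s) (measRew t)
    have hred2 := M.reduce hM (fun _ => π') (n := t+1) (k := M.T - t) (by omega)
      (fun u s hu hu' => hπ'.2 s) (measRew t)
    rw [show t+1 + (M.T - t) = M.T + 1 by omega] at hred1 hred2
    have hcongr : ∑ τ : M.Traj, M.gwp (hybW π π' t) (t+1) τ * M.rew τ t
        = ∑ τ : M.Traj, M.gwp (fun _ => π') (t+1) τ * M.rew τ t :=
      Finset.sum_congr rfl fun τ _ => by
        rw [M.gwp_congr (fun u hu => hybW_le (by omega)) τ]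
    exact mul_left_cancel₀ (pow_ne_zero (M.T - t) hCne)
      ((hred1.symm.trans hcongr).trans hred2)
  -- telescoping : B t = C (t+1)
  have hB_eq : ∀ t, t < M.T →
      (∑ τ : M.Traj, M.gwp (hybW π π' t) (M.T+1) τ *
        (if t < M.T then ∑ a, π' (M.st τ (t+1)) a * Qt (M.st τ (t+1)) a else 0))
      = ∑ τ : M.Traj, M.gwp (hybW π π' (t+1)) (M.T+1) τ * Qt (M.st τ (t+1)) (M.ac τ (t+1)) := by
    intro t ht
    have hBif : (∑ τ : M.Traj, M.gwp (hybW π π' t) (M.T+1) τ *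
        (if t < M.T then ∑ a, π' (M.st τ (t+1)) a * Qt (M.st τ (t+1)) a else 0))
        = ∑ τ : M.Traj, M.gwp (hybW π π' t) (M.T+1) τ *
            ∑ a, π' (M.st τ (t+1)) a * Qt (M.st τ (t+1)) a :=
      Finset.sum_congr rfl fun τ _ => by rw [if_pos ht]
    have hmeas1 : M.Meas (t+1) (fun τ => ∑ a, π' (M.st τ (t+1)) a * Qt (M.st τ (t+1)) a) :=
      fun τ τ' hs _ _ => by simp only; rw [hs (t+1) le_rfl]
    have hmeas2 : M.Meas (t+2) (fun τ => Qt (M.st τ (t+1)) (M.ac τ (t+1))) :=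
      fun τ τ' hs ha _ => by simp only; rw [hs (t+1) (by omega), ha (t+1) (by omega)]
    have hred1 := M.reduce hM (hybW π π' t) (n := t+1) (k := M.T - t) (by omega)
      (fun u s hu hu' => by rw [hybW_gt (by omega)]; exact hπ.2 s) hmeas1
    have hred2 := M.reduce hM (hybW π π' (t+1)) (n := t+1+1) (k := M.T - t - 1) (by omega)
      (fun u s hu hu' => by rw [hybW_gt (by omega)]; exact hπ.2 s) hmeas2
    rw [show t+1 + (M.T - t) = M.T + 1 by omega] at hred1
    rw [show t+1+1 + (M.T - t - 1) = M.T + 1 by omega] at hred2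
    have hstep := M.stepx hM (hybW π π' (t+1)) (n := t+1) (by omega)
      (f := fun _ => (1:ℝ)) (fun _ _ _ _ _ => rfl) Qt
    simp only [hybW_le (le_refl (t+1)), one_mul] at hstep
    have hcongr : ∑ τ : M.Traj, M.gwp (hybW π π' (t+1)) (t+1) τ *
          ∑ a, π' (M.st τ (t+1)) a * Qt (M.st τ (t+1)) a
        = ∑ τ : M.Traj, M.gwp (hybW π π' t) (t+1) τ *
          ∑ a, π' (M.st τ (t+1)) a * Qt (M.st τ (t+1)) a :=
      Finset.sum_congr rfl fun τ _ => by
        rw [M.gwp_congr (w := hybW π π' (t+1)) (w' := hybW π π' t)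
          (fun u hu => by rw [hybW_le (by omega), hybW_le (by omega)]) τ]
    rw [hBif]
    -- combine everything
    have hchain : (Fintype.card S * Fintype.card A * Fintype.card Rw : ℝ)^(M.T - t) *
        (∑ τ : M.Traj, M.gwp (hybW π π' t) (M.T+1) τ *
          ∑ a, π' (M.st τ (t+1)) a * Qt (M.st τ (t+1)) a)
        = (Fintype.card S * Fintype.card A * Fintype.card Rw : ℝ)^(M.T - t) *
        (∑ τ : M.Traj, M.gwp (hybW π π' (t+1)) (M.T+1) τ * Qt (M.st τ (t+1)) (M.ac τ (t+1))) := by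
      rw [← hred1, ← hcongr, hstep, hred2, ← mul_assoc, ← pow_succ']
      congr 2
      omega
    exact mul_left_cancel₀ (pow_ne_zero (M.T - t) hCne) hchain
  -- base : C 0 equals the baseline value
  have hC0 : (∑ τ : M.Traj, M.gwp (hybW π π' 0) (M.T+1) τ * Qt (M.st τ 0) (M.ac τ 0))
      = ∑ a, π' M.s0 a * Qt M.s0 a := by
    have hmeas : M.Meas 1 (fun τ => Qt (M.st τ 0) (M.ac τ 0)) :=
      fun τ τ' hs ha _ => by simp only; rw [hs 0 (by omega), ha 0 (by omega)]
    have hred := M.reduce hM (hybW π π' 0) (n := 1) (k := M.T) (by omega)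
      (fun u s hu hu' => by rw [hybW_gt (by omega)]; exact hπ.2 s) hmeas
    rw [show 1 + M.T = M.T + 1 by omega] at hred
    have hstep := M.stepx hM (hybW π π' 0) (n := 0) (by omega)
      (f := fun _ => (1:ℝ)) (fun _ _ _ _ _ => rfl) Qt
    simp only [hybW_le (le_refl 0), one_mul, zero_add] at hstep
    have hzero := M.gwp_zero (hybW π π' 0) (fun s => ∑ a, π' s a * Qt s a)
    have h1 : ∑ τ : M.Traj, M.gwp (hybW π π' 0) 0 τ * ∑ a, π' (M.st τ 0) a * Qt (M.st τ 0) a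
        = (Fintype.card S * Fintype.card A * Fintype.card Rw : ℝ)^(M.T+1) *
          ∑ a, π' M.s0 a * Qt M.s0 a :=
      mul_left_cancel₀ (ne_of_gt hSpos) hzero
    have hchain : (Fintype.card S * Fintype.card A * Fintype.card Rw : ℝ)^(M.T+1) *
        (∑ a, π' M.s0 a * Qt M.s0 a)
        = (Fintype.card S * Fintype.card A * Fintype.card Rw : ℝ)^(M.T+1) *
        (∑ τ : M.Traj, M.gwp (hybW π π' 0) (M.T+1) τ * Qt (M.st τ 0) (M.ac τ 0)) := by
      rw [← h1, hstep, hred, ← mul_assoc, ← pow_succ']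
    exact (mul_left_cancel₀ (pow_ne_zero (M.T+1) hCne) hchain).symm
  -- J in terms of per-step sums
  have hJ : M.J π' = ∑ t ∈ range (M.T+1), M.γ^t *
      ∑ τ : M.Traj, M.gwp (fun _ => π') (M.T+1) τ * M.rew τ t := by
    rw [FinMDP.J]
    calc ∑ τ : M.Traj, M.prob π' τ * M.ret τ
        = ∑ τ : M.Traj, ∑ t ∈ range (M.T+1),
            M.γ^t * (M.gwp (fun _ => π') (M.T+1) τ * M.rew τ t) := by
          refine Finset.sum_congr rfl fun τ _ => ?_
          rw [FinMDP.ret, Finset.mul_sum]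
          exact Finset.sum_congr rfl fun t _ => by rw [M.prob_eq_gwp]; ring
      _ = ∑ t ∈ range (M.T+1), ∑ τ : M.Traj,
            M.γ^t * (M.gwp (fun _ => π') (M.T+1) τ * M.rew τ t) := Finset.sum_comm
      _ = _ := Finset.sum_congr rfl fun t _ => (Finset.mul_sum _ _ _).symm
  -- expand the estimator
  have step1 : ∑ τ : M.Traj, M.prob π τ *
      ((∑ a, π' M.s0 a * Qt M.s0 a) + ∑ t ∈ range (M.T + 1), M.γ ^ t *
        (∏ t' ∈ range (t + 1), π' (M.st τ t') (M.ac τ t') / π (M.st τ t') (M.ac τ t')) *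
        (M.rew τ t
          + M.γ * (if t < M.T then ∑ a, π' (M.st τ (t + 1)) a * Qt (M.st τ (t + 1)) a else 0)
          - Qt (M.st τ t) (M.ac τ t)))
      = (∑ a, π' M.s0 a * Qt M.s0 a) + ∑ t ∈ range (M.T+1),
          (M.γ^t * (∑ τ : M.Traj, M.gwp (hybW π π' t) (M.T+1) τ * M.rew τ t)
           + M.γ^t * M.γ * (∑ τ : M.Traj, M.gwp (hybW π π' t) (M.T+1) τ *
              (if t < M.T then ∑ a, π' (M.st τ (t+1)) a * Qt (M.st τ (t+1)) a else 0))
           - M.γ^t * (∑ τ : M.Traj, M.gwp (hybW π π' t) (M.T+1) τ * Qt (M.st τ t) (M.ac τ t))) := by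
    calc ∑ τ : M.Traj, M.prob π τ *
        ((∑ a, π' M.s0 a * Qt M.s0 a) + ∑ t ∈ range (M.T + 1), M.γ ^ t *
          (∏ t' ∈ range (t + 1), π' (M.st τ t') (M.ac τ t') / π (M.st τ t') (M.ac τ t')) *
          (M.rew τ t
            + M.γ * (if t < M.T then ∑ a, π' (M.st τ (t + 1)) a * Qt (M.st τ (t + 1)) a else 0)
            - Qt (M.st τ t) (M.ac τ t)))
        = ∑ τ : M.Traj, (M.prob π τ * (∑ a, π' M.s0 a * Qt M.s0 a)
            + ∑ t ∈ range (M.T+1),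
              (M.γ^t * (M.gwp (hybW π π' t) (M.T+1) τ * M.rew τ t)
               + M.γ^t * M.γ * (M.gwp (hybW π π' t) (M.T+1) τ *
                  (if t < M.T then ∑ a, π' (M.st τ (t+1)) a * Qt (M.st τ (t+1)) a else 0))
               - M.γ^t * (M.gwp (hybW π π' t) (M.T+1) τ * Qt (M.st τ t) (M.ac τ t)))) := by
          refine Finset.sum_congr rfl fun τ _ => ?_
          rw [mul_add]
          congr 1
          rw [Finset.mul_sum]
          refine Finset.sum_congr rfl fun t ht => ?_
          have ht' : t ≤ M.T := by have := mem_range.mp ht; omega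
          rw [← M.hyb_weight π π' hπpos ht' τ]
          ring
      _ = (∑ τ : M.Traj, M.prob π τ * (∑ a, π' M.s0 a * Qt M.s0 a))
          + ∑ τ : M.Traj, ∑ t ∈ range (M.T+1),
              (M.γ^t * (M.gwp (hybW π π' t) (M.T+1) τ * M.rew τ t)
               + M.γ^t * M.γ * (M.gwp (hybW π π' t) (M.T+1) τ *
                  (if t < M.T then ∑ a, π' (M.st τ (t+1)) a * Qt (M.st τ (t+1)) a else 0))
               - M.γ^t * (M.gwp (hybW π π' t) (M.T+1) τ * Qt (M.st τ t) (M.ac τ t))) :=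
          Finset.sum_add_distrib
      _ = _ := by
          congr 1
          · rw [← Finset.sum_mul, hnorm, one_mul]
          · rw [Finset.sum_comm]
            refine Finset.sum_congr rfl fun t _ => ?_
            rw [Finset.sum_sub_distrib, Finset.sum_add_distrib, ← Finset.mul_sum,
              ← Finset.mul_sum, ← Finset.mul_sum]
  rw [step1]
  -- final telescoping computation
  rw [Finset.sum_sub_distrib, Finset.sum_add_distrib]
  have hfin1 : ∑ t ∈ range (M.T+1),
      M.γ^t * (∑ τ : M.Traj, M.gwp (hybW π π' t) (M.T+1) τ * M.rew τ t) = M.J π' := by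
    rw [hJ]
    exact Finset.sum_congr rfl fun t ht => by
      rw [hA_eq t (by have := mem_range.mp ht; omega)]
  have hfin2 : ∑ t ∈ range (M.T+1),
      M.γ^t * M.γ * (∑ τ : M.Traj, M.gwp (hybW π π' t) (M.T+1) τ *
        (if t < M.T then ∑ a, π' (M.st τ (t+1)) a * Qt (M.st τ (t+1)) a else 0))
      = ∑ t ∈ range M.T, M.γ^t * M.γ *
          (∑ τ : M.Traj, M.gwp (hybW π π' (t+1)) (M.T+1) τ * Qt (M.st τ (t+1)) (M.ac τ (t+1))) := by
    rw [Finset.sum_range_succ]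
    have hlast : (∑ τ : M.Traj, M.gwp (hybW π π' M.T) (M.T+1) τ *
        (if M.T < M.T then ∑ a, π' (M.st τ (M.T+1)) a * Qt (M.st τ (M.T+1)) a else 0)) = 0 := by
      simp
    rw [hlast, mul_zero, add_zero]
    exact Finset.sum_congr rfl fun t ht => by
      rw [hB_eq t (mem_range.mp ht)]
  have hfin3 : ∑ t ∈ range (M.T+1),
      M.γ^t * (∑ τ : M.Traj, M.gwp (hybW π π' t) (M.T+1) τ * Qt (M.st τ t) (M.ac τ t))
      = (∑ t ∈ range M.T, M.γ^t * M.γ *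
          (∑ τ : M.Traj, M.gwp (hybW π π' (t+1)) (M.T+1) τ * Qt (M.st τ (t+1)) (M.ac τ (t+1))))
        + (∑ a, π' M.s0 a * Qt M.s0 a) := by
    rw [Finset.sum_range_succ']
    simp only [pow_succ, pow_zero, one_mul, hC0]
  rw [hfin1, hfin2, hfin3]
  ring
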